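/- Fix n ∈ ℕ, real numbers a₁ > 0, a₂ > 0, b₂ ∈ ℝ and b₁ ≠ 0. For h > 0 let b_n(h) and u_n(h) denote the continuous Bannai–Ito recurrence coefficients evaluated at parameters (α,β,γ,δ) = (a₁, b₁/h, a₂, b₂/h). Then as h → 0⁺ one has (h/(2b₁))·b_n(h) → 1 − A_n − C_n and (h/(2b₁))²·u_n(h) → A_{n−1}·C_n, where A_n = (1−b₂/b₁)(n+4a₁+2)/(2n+4a₁+4a₂+4) for n even, A_n = (1+b₂/b₁)(n+4a₁+4a₂+3)/(2n+4a₁+4a₂+4) for n odd, C_n = (1+b₂/b₁)n/(2n+4a₁+4a₂+2) for n even, and C_n = (1−b₂/b₁)(n+4a₂+1)/(2n+4a₁+4a₂+2) for n odd. -/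

import Mathlib

open Filter

/-- The diagonal recurrence coefficient `bₙ` of the continuous Bannai–Ito polynomials
with parameters `(α,β,γ,δ)`. -/
noncomputable def cBIb (α β γ δ : ℝ) (n : ℕ) : ℝ :=
  if Even n then
    2 * β - ((n : ℝ) + 4 * α + 2) * (β - δ) / ((n : ℝ) + 2 * α + 2 * γ + 2)
      - (n : ℝ) * (β + δ) / ((n : ℝ) + 2 * α + 2 * γ + 1)
  else
    2 * β - ((n : ℝ) + 4 * α + 4 * γ + 3) * (β + δ) / ((n : ℝ) + 2 * α + 2 * γ + 2)
      - ((n : ℝ) + 4 * γ + 1) * (β - δ) / ((n : ℝ) + 2 * α + 2 * γ + 1)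

/-- The off-diagonal recurrence coefficient `uₙ` of the continuous Bannai–Ito polynomials
with parameters `(α,β,γ,δ)`; `|z|²` is the squared modulus `Complex.normSq`. -/
noncomputable def cBIu (α β γ δ : ℝ) (n : ℕ) : ℝ :=
  if Even n then
    (n : ℝ) * ((n : ℝ) + 4 * α + 4 * γ + 2) *
        Complex.normSq (((n : ℝ) + 2 * (α + γ) + 1 : ℝ) + (2 * (β + δ) : ℝ) * Complex.I) /
      (4 * ((n : ℝ) + 2 * α + 2 * γ + 1) ^ 2)
  else
    ((n : ℝ) + 4 * α + 1) * ((n : ℝ) + 4 * γ + 1) *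
        Complex.normSq (((n : ℝ) + 2 * (α + γ) + 1 : ℝ) + (2 * (β - δ) : ℝ) * Complex.I) /
      (4 * ((n : ℝ) + 2 * α + 2 * γ + 1) ^ 2)

/-- The coefficient `Aₙ` of the monic big `-1` Jacobi recurrence with parameters
`(4a₁+1, 4a₂+1, -b₂/b₁)`, in the contracted form of the statement. -/
noncomputable def bigM1A' (a₁ a₂ b₁ b₂ : ℝ) (n : ℕ) : ℝ :=
  if Even n then
    (1 - b₂ / b₁) * ((n : ℝ) + 4 * a₁ + 2) / (2 * (n : ℝ) + 4 * a₁ + 4 * a₂ + 4)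
  else
    (1 + b₂ / b₁) * ((n : ℝ) + 4 * a₁ + 4 * a₂ + 3) / (2 * (n : ℝ) + 4 * a₁ + 4 * a₂ + 4)

/-- The coefficient `Cₙ` of the monic big `-1` Jacobi recurrence with parameters
`(4a₁+1, 4a₂+1, -b₂/b₁)`, in the contracted form of the statement. -/
noncomputable def bigM1C' (a₁ a₂ b₁ b₂ : ℝ) (n : ℕ) : ℝ :=
  if Even n then
    (1 + b₂ / b₁) * (n : ℝ) / (2 * (n : ℝ) + 4 * a₁ + 4 * a₂ + 2)
  else
    (1 - b₂ / b₁) * ((n : ℝ) + 4 * a₂ + 1) / (2 * (n : ℝ) + 4 * a₁ + 4 * a₂ + 2)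

set_option maxHeartbeats 1600000 in
/-- the `h → 0⁺` contraction of the continuous Bannai–Ito recurrence
coefficients with parameters `(a₁, b₁/h, a₂, b₂/h)` (variable rescaled by `2b₁/h`)
yields the recurrence data `1 - Aₙ - Cₙ` and `Aₙ₋₁ Cₙ` of the monic big `-1` Jacobi
polynomials `Jₙ(x; 4a₁+1, 4a₂+1, -b₂/b₁)`. -/
theorem continuousBannaiIto_to_bigM1Jacobi_limit
    (n : ℕ) (a₁ a₂ b₁ b₂ : ℝ) (ha₁ : a₁ > 0) (ha₂ : a₂ > 0) (hb₁ : b₁ ≠ 0) :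
    Tendsto (fun h : ℝ => (h / (2 * b₁)) * cBIb a₁ (b₁ / h) a₂ (b₂ / h) n)
      (nhdsWithin 0 (Set.Ioi 0))
      (nhds (1 - bigM1A' a₁ a₂ b₁ b₂ n - bigM1C' a₁ a₂ b₁ b₂ n)) ∧
    Tendsto (fun h : ℝ => (h / (2 * b₁)) ^ 2 * cBIu a₁ (b₁ / h) a₂ (b₂ / h) n)
      (nhdsWithin 0 (Set.Ioi 0))
      (nhds (bigM1A' a₁ a₂ b₁ b₂ (n - 1) * bigM1C' a₁ a₂ b₁ b₂ n)) := by
  have hD1 : (n:ℝ) + 2*a₁ + 2*a₂ + 1 ≠ 0 := by positivity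
  have hD2 : (n:ℝ) + 2*a₁ + 2*a₂ + 2 ≠ 0 := by positivity
  have hE1 : 2*(n:ℝ) + 4*a₁ + 4*a₂ + 2 ≠ 0 := by positivity
  have hE2 : 2*(n:ℝ) + 4*a₁ + 4*a₂ + 4 ≠ 0 := by positivity
  have hF1 : 2*((n:ℝ)-1) + 4*a₁ + 4*a₂ + 4 ≠ 0 := fun hc => hE1 (by linarith)
  constructor
  · refine Tendsto.congr' ?_ tendsto_const_nhds
    filter_upwards [self_mem_nhdsWithin] with h hh
    have hh' : (h:ℝ) ≠ 0 := ne_of_gt hh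
    rcases Nat.even_or_odd n with he | ho
    · simp only [cBIb, bigM1A', bigM1C', if_pos he]
      field_simp
      ring
    · simp only [cBIb, bigM1A', bigM1C', if_neg (Nat.not_even_iff_odd.mpr ho)]
      field_simp
      ring
  · rcases Nat.even_or_odd n with he | ho
    · rcases Nat.eq_zero_or_pos n with rfl | hn
      · have hfun : (fun h : ℝ => (h/(2*b₁))^2 * cBIu a₁ (b₁/h) a₂ (b₂/h) 0)
            = fun _ : ℝ => (0:ℝ) := by
          funext h; simp [cBIu]
        have hval : bigM1A' a₁ a₂ b₁ b₂ (0-1) * bigM1C' a₁ a₂ b₁ b₂ 0 = 0 := by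
          simp [bigM1C']
        rw [hfun, hval]
        exact tendsto_const_nhds
      · have hodd : ¬ Even (n-1) := Nat.not_even_iff_odd.mpr (Nat.Even.sub_odd hn he odd_one)
        have hcast : ((n-1:ℕ):ℝ) = (n:ℝ) - 1 := by
          rw [Nat.cast_sub hn, Nat.cast_one]
        set K : ℝ := ((n:ℝ) + 2*(a₁+a₂) + 1)^2 with hK
        set C : ℝ := (n:ℝ)*((n:ℝ)+4*a₁+4*a₂+2) / (16*b₁^2*((n:ℝ)+2*a₁+2*a₂+1)^2) with hC
        have heq : ∀ h ∈ Set.Ioi (0:ℝ),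
            (h/(2*b₁))^2 * cBIu a₁ (b₁/h) a₂ (b₂/h) n
              = (h^2*K + 4*(b₁+b₂)^2) * C := by
          intro h hh
          have hh' : h ≠ 0 := ne_of_gt hh
          simp only [cBIu, if_pos he, Complex.normSq_add_mul_I, hK, hC]
          field_simp
          ring
        have hval : bigM1A' a₁ a₂ b₁ b₂ (n-1) * bigM1C' a₁ a₂ b₁ b₂ n
            = ((0:ℝ)^2*K + 4*(b₁+b₂)^2) * C := by
          simp only [bigM1A', bigM1C', if_pos he, if_neg hodd, hcast, hK, hC]
          rw [show 2*((n:ℝ)-1)+4*a₁+4*a₂+4 = 2*(n:ℝ)+4*a₁+4*a₂+2 by ring]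
          field_simp
          ring
        rw [hval]
        have hc : Continuous fun h : ℝ => (h^2*K + 4*(b₁+b₂)^2) * C := by fun_prop
        refine Tendsto.congr' ?_ ((hc.tendsto 0).mono_left nhdsWithin_le_nhds)
        filter_upwards [self_mem_nhdsWithin] with h hh
        exact (heq h hh).symm
    · have hn : 1 ≤ n := ho.pos
      have heven : Even (n-1) := Nat.Odd.sub_odd ho odd_one
      have hcast : ((n-1:ℕ):ℝ) = (n:ℝ) - 1 := by
        rw [Nat.cast_sub hn, Nat.cast_one]
      set K : ℝ := ((n:ℝ) + 2*(a₁+a₂) + 1)^2 with hK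
      set C : ℝ := ((n:ℝ)+4*a₁+1)*((n:ℝ)+4*a₂+1) / (16*b₁^2*((n:ℝ)+2*a₁+2*a₂+1)^2) with hC
      have heq : ∀ h ∈ Set.Ioi (0:ℝ),
          (h/(2*b₁))^2 * cBIu a₁ (b₁/h) a₂ (b₂/h) n
            = (h^2*K + 4*(b₁-b₂)^2) * C := by
        intro h hh
        have hh' : h ≠ 0 := ne_of_gt hh
        simp only [cBIu, if_neg (Nat.not_even_iff_odd.mpr ho), Complex.normSq_add_mul_I, hK, hC]
        field_simp
        ring
      have hval : bigM1A' a₁ a₂ b₁ b₂ (n-1) * bigM1C' a₁ a₂ b₁ b₂ n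
          = ((0:ℝ)^2*K + 4*(b₁-b₂)^2) * C := by
        simp only [bigM1A', bigM1C', if_pos heven, if_neg (Nat.not_even_iff_odd.mpr ho),
          hcast, hK, hC]
        rw [show 2*((n:ℝ)-1)+4*a₁+4*a₂+4 = 2*(n:ℝ)+4*a₁+4*a₂+2 by ring]
        field_simp
        ring
      rw [hval]
      have hc : Continuous fun h : ℝ => (h^2*K + 4*(b₁-b₂)^2) * C := by fun_prop
      refine Tendsto.congr' ?_ ((hc.tendsto 0).mono_left nhdsWithin_le_nhds)
      filter_upwards [self_mem_nhdsWithin] with h hh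
      exact (heq h hh).symm
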